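/- Unravelling preserves truth: let M be a pseudo-model and U(M) its unravelling. For every history h of M and every formula φ of L_D, M,last(h) ⊨ φ if and only if U(M),h ⊨ φ. -/

import Mathlib

attribute [local instance] Classical.propDecidable

noncomputable section

/-- Formulas of the epistemic language `L_D` with distributed knowledge `D_B`
for nonempty groups `B` of agents. -/
inductive Form (A AP : Type) : Type
  | atom : AP → Form A AP
  | neg  : Form A AP → Form A AP
  | and  : Form A AP → Form A AP → Form A AP
  | dk   : (B : Finset A) → B.Nonempty → Form A AP → Form A AP

namespace Form

variable {A AP : Type}

/-- Disjunction, `φ ∨ ψ := ¬(¬φ ∧ ¬ψ)`. -/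
def or (φ ψ : Form A AP) : Form A AP := neg ((neg φ).and (neg ψ))

/-- Implication, `φ ⇒ ψ := ¬φ ∨ ψ`. -/
def imp (φ ψ : Form A AP) : Form A AP := (neg φ).or ψ

/-- `⊤ := p ∨ ¬p`. -/
def verum [Nonempty AP] : Form A AP :=
  (atom (Classical.arbitrary AP)).or (neg (atom (Classical.arbitrary AP)))

/-- `⊥ := ¬⊤`. -/
def falsum [Nonempty AP] : Form A AP := neg verum

/-- Individual knowledge `K_a φ := D_{{a}} φ`. -/
def K (a : A) (φ : Form A AP) : Form A AP := dk {a} (Finset.singleton_nonempty a) φ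

/-- `dead_a := K_a ⊥`. -/
def deadAgent [Nonempty AP] (a : A) : Form A AP := K a falsum

/-- `alive_a := ¬dead_a`. -/
def aliveAgent [Nonempty AP] (a : A) : Form A AP := (deadAgent a).neg

/-- `alive_B := ¬ D_B ⊥`. -/
def aliveGrp [Nonempty AP] (B : Finset A) (hB : B.Nonempty) : Form A AP := (dk B hB falsum).neg

/-- Finite conjunction. -/
def bigAnd [Nonempty AP] : List (Form A AP) → Form A AP
  | [] => verum
  | φ :: t => φ.and (bigAnd t)

/-- Finite disjunction. -/
def bigOr [Nonempty AP] : List (Form A AP) → Form A AP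
  | [] => falsum
  | φ :: t => φ.or (bigOr t)

/-- `dead_C := ⋀_{a ∈ C} dead_a`. -/
def deadGrp [Nonempty AP] (C : Finset A) : Form A AP := bigAnd (C.toList.map deadAgent)

end Form

/-- A propositional tautology: true under every assignment that interprets `¬` and `∧`
classically (atoms and `D_B`-formulas are treated as opaque). -/
def IsTaut {A AP : Type} (φ : Form A AP) : Prop :=
  ∀ v : Form A AP → Prop,
    (∀ ψ : Form A AP, v ψ.neg ↔ ¬ v ψ) →
    (∀ ψ χ : Form A AP, v (ψ.and χ) ↔ (v ψ ∧ v χ)) →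
    v φ

theorem unionNE {α : Type} [DecidableEq α] {s t : Finset α} (h : s.Nonempty) :
    (s ∪ t).Nonempty :=
  ⟨h.choose, Finset.mem_union_left _ h.choose_spec⟩

section ProofSystem

variable {A AP : Type} [Fintype A] [Nonempty AP]

/-- The proof system `SC` (axioms `K`, `B`, `4`, `Mono`, `Union`, `NE`, `P`, all
propositional tautologies, modus ponens and necessitation), extended by an arbitrary
additional set `Ax` of axioms. -/
inductive Prf (Ax : Form A AP → Prop) : Form A AP → Prop
  | taut {φ : Form A AP} : IsTaut φ → Prf Ax φ
  | mp {φ ψ : Form A AP} : Prf Ax (φ.imp ψ) → Prf Ax φ → Prf Ax ψ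
  | nec {φ : Form A AP} (B : Finset A) (hB : B.Nonempty) :
      Prf Ax φ → Prf Ax (Form.dk B hB φ)
  | axK {φ ψ : Form A AP} (B : Finset A) (hB : B.Nonempty) :
      Prf Ax ((Form.dk B hB (φ.imp ψ)).imp ((Form.dk B hB φ).imp (Form.dk B hB ψ)))
  | axB {φ : Form A AP} (B : Finset A) (hB : B.Nonempty) :
      Prf Ax (φ.imp (Form.dk B hB (Form.neg (Form.dk B hB φ.neg))))
  | ax4 {φ : Form A AP} (B : Finset A) (hB : B.Nonempty) :
      Prf Ax ((Form.dk B hB φ).imp (Form.dk B hB (Form.dk B hB φ)))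
  | axMono {φ : Form A AP} (B B' : Finset A) (hB : B.Nonempty) (hB' : B'.Nonempty)
      (hsub : B ⊆ B') : Prf Ax ((Form.dk B hB φ).imp (Form.dk B' hB' φ))
  | axUnion (B B' : Finset A) (hB : B.Nonempty) (hB' : B'.Nonempty) :
      Prf Ax (((Form.aliveGrp B hB).and (Form.aliveGrp B' hB')).imp
        (Form.aliveGrp (B ∪ B') (unionNE hB)))
  | axNE : Prf Ax (Form.bigOr ((Finset.univ : Finset A).toList.map Form.aliveAgent))
  | axP {φ : Form A AP} (B : Finset A) (hB : B.Nonempty) :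
      Prf Ax ((((Form.aliveGrp B hB).and (Form.deadGrp Bᶜ)).and φ).imp
        (Form.dk B hB ((Form.deadGrp Bᶜ).imp φ)))
  | extra {φ : Form A AP} : Ax φ → Prf Ax φ

/-- Provability in `SC` itself (no extra axioms). -/
def SC : Form A AP → Prop := Prf (fun _ => False)

/-- Instances of Axiom `Min : alive_B ∧ dead_{A∖B} ⇒ D_B dead_{A∖B}` for `B ⊊ A`. -/
def MinAx : Form A AP → Prop := fun φ =>
  ∃ (B : Finset A) (hB : B.Nonempty), B ≠ Finset.univ ∧
    φ = ((Form.aliveGrp B hB).and (Form.deadGrp Bᶜ)).imp (Form.dk B hB (Form.deadGrp Bᶜ))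

/-- Instances of Axiom `Max : alive_B ⇒ ¬ D_B ¬ dead_{A∖B}` for `B ⊊ A`. -/
def MaxAx : Form A AP → Prop := fun φ =>
  ∃ (B : Finset A) (hB : B.Nonempty), B ≠ Finset.univ ∧
    φ = (Form.aliveGrp B hB).imp (Form.neg (Form.dk B hB (Form.neg (Form.deadGrp Bᶜ))))

/-- Provability in `SCmin = SC + Min`. -/
def SCmin : Form A AP → Prop := Prf MinAx

/-- Provability in `SCmax = SC + Max`. -/
def SCmax : Form A AP → Prop := Prf MaxAx

/-- `Γ ⊢_P φ` : some finite conjunction of members of `Γ` provably implies `φ`. -/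
def ProvesFrom (P : Form A AP → Prop) (Γ : Set (Form A AP)) (φ : Form A AP) : Prop :=
  ∃ L : List (Form A AP), (∀ γ ∈ L, γ ∈ Γ) ∧ P ((Form.bigAnd L).imp φ)

/-- Consistency of a set of formulas with respect to a provability predicate `P`. -/
def ConsistentSet (P : Form A AP → Prop) (Γ : Set (Form A AP)) : Prop :=
  ¬ ProvesFrom P Γ Form.falsum

/-- Maximal consistent sets of formulas. -/
def MaxConsistent (P : Form A AP → Prop) (Γ : Set (Form A AP)) : Prop :=
  ConsistentSet P Γ ∧ ∀ φ ∉ Γ, ¬ ConsistentSet P (insert φ Γ)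

end ProofSystem

/-! ### Simplicial models -/

/-- The data of a (generalized) simplicial model: a set `S` of simplexes over the vertex
type `V`, a colouring `chi`, a set of worlds `Wld` and a labelling of worlds. -/
structure SimpData (A AP V : Type) where
  S : Set (Finset V)
  chi : V → A
  Wld : Set (Finset V)
  label : Finset V → Set AP

namespace SimpData

variable {A AP V : Type}

/-- A facet: a simplex maximal under inclusion. -/
def IsFacet (C : SimpData A AP V) (X : Finset V) : Prop :=
  X ∈ C.S ∧ ∀ Y ∈ C.S, X ⊆ Y → X = Y

/-- `⟨V,S,chi⟩` is a chromatic simplicial complex: simplexes are nonempty, every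
singleton is a simplex, `S` is downward closed, and every simplex has pairwise
distinct colours. -/
def IsComplex (C : SimpData A AP V) : Prop :=
  (∀ X ∈ C.S, X.Nonempty) ∧
  (∀ v : V, ({v} : Finset V) ∈ C.S) ∧
  (∀ X ∈ C.S, ∀ Y : Finset V, Y ⊆ X → Y.Nonempty → Y ∈ C.S) ∧
  (∀ X ∈ C.S, ∀ v ∈ X, ∀ w ∈ X, C.chi v = C.chi w → v = w)

/-- `C` is a generalized simplicial model: a chromatic simplicial complex together
with a set of worlds `Wld` with `Facets(C) ⊆ Wld ⊆ S`. -/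
def IsModel (C : SimpData A AP V) : Prop :=
  C.IsComplex ∧ (∀ X, C.IsFacet X → X ∈ C.Wld) ∧ C.Wld ⊆ C.S

/-- The model is minimal: the worlds are exactly the facets. -/
def Minimal (C : SimpData A AP V) : Prop := ∀ X, X ∈ C.Wld ↔ C.IsFacet X

/-- The model is maximal: every simplex is a world. -/
def Maximal (C : SimpData A AP V) : Prop := C.Wld = C.S

end SimpData

/-- Satisfaction on simplicial models: `C,w ⊨ D_B φ` iff `φ` holds at every world `w'`
with `B ⊆ chi(w ∩ w')`. -/
def SimpData.sat {A AP V : Type} (C : SimpData A AP V) : Finset V → Form A AP → Prop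
  | w, .atom p => p ∈ C.label w
  | w, .neg φ => ¬ C.sat w φ
  | w, .and φ ψ => C.sat w φ ∧ C.sat w ψ
  | w, .dk B _ φ => ∀ w' ∈ C.Wld, (↑B : Set A) ⊆ C.chi '' ((↑w : Set V) ∩ ↑w') → C.sat w' φ

/-! ### Partial epistemic models -/

/-- The data of a partial epistemic model: an accessibility relation for each agent and
a labelling of worlds. -/
structure PEData (A AP W : Type) where
  rel : A → W → W → Prop
  label : W → Set AP

namespace PEData

variable {A AP W : Type}

/-- Each relation is a partial equivalence relation (symmetric and transitive). -/
def IsPE (M : PEData A AP W) : Prop := ∀ a : A, Symmetric (M.rel a) ∧ Transitive (M.rel a)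

/-- The set of agents alive in a world. -/
def live (M : PEData A AP W) (w : W) : Set A := {a | M.rel a w w}

/-- Every world has at least one alive agent. -/
def NoEmptyWorld (M : PEData A AP W) : Prop := ∀ w : W, (M.live w).Nonempty

/-- Distinct worlds with the same alive agents are distinguished by some alive agent. -/
def Proper (M : PEData A AP W) : Prop :=
  ∀ w w' : W, w ≠ w' → M.live w = M.live w' → ∃ a ∈ M.live w, ¬ M.rel a w w'

/-- The model has no sub-world. -/
def Minimal (M : PEData A AP W) : Prop :=
  ∀ w w' : W, M.live w ⊂ M.live w' → ∃ a ∈ M.live w, ¬ M.rel a w w'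

/-- The model has all sub-worlds. -/
def Maximal (M : PEData A AP W) : Prop :=
  ∀ w' : W, ∀ B : Set A, B.Nonempty → B ⊂ M.live w' →
    ∃ w : W, M.live w = B ∧ ∀ a ∈ B, M.rel a w w'

end PEData

/-- Satisfaction on partial epistemic models: `M,w ⊨ D_B φ` iff `φ` holds at every `w'`
with `w ∼_a w'` for all `a ∈ B`. -/
def PEData.sat {A AP W : Type} (M : PEData A AP W) : W → Form A AP → Prop
  | w, .atom p => p ∈ M.label w
  | w, .neg φ => ¬ M.sat w φ
  | w, .and φ ψ => M.sat w φ ∧ M.sat w ψ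
  | w, .dk B _ φ => ∀ w' : W, (∀ a ∈ B, M.rel a w w') → M.sat w' φ

/-- The partial epistemic model `κ(C)` associated with a simplicial model `C`:
same worlds, `w ∼_a w'` iff `a ∈ chi(w ∩ w')`, same labelling. -/
def kappa {A AP V : Type} (C : SimpData A AP V) : PEData A AP {w : Finset V // w ∈ C.Wld} where
  rel := fun a w w' => a ∈ C.chi '' ((↑w.1 : Set V) ∩ ↑w'.1)
  label := fun w => C.label w.1

/-- Vertices of `σ(M)`: pairs `v^w_a = (a, [w]_a)` with `a` alive in `w`. -/
def sigmaVert {A AP W : Type} (M : PEData A AP W) : Type :=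
  {v : A × Set W // ∃ w : W, M.rel v.1 w w ∧ v.2 = {w' | M.rel v.1 w w'}}

/-- The world `X_w = { v^w_a | a ∈ live(w) }` of `σ(M)`. -/
def sigmaWorld {A AP W : Type} [Fintype A] (M : PEData A AP W) (w : W) :
    Finset (sigmaVert M) :=
  ((Finset.univ : Finset A).filter (fun a => M.rel a w w)).attach.image
    (fun a => ⟨(a.1, {w' | M.rel a.1 w w'}),
      ⟨w, by exact (Finset.mem_filter.mp a.2).2, rfl⟩⟩)

/-- The simplicial model `σ(M)` associated with a partial epistemic model `M`:
simplexes are the nonempty subsets of the sets `X_w`, worlds are the `X_w`,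
colouring is the first projection, and `ℓ(X_w) = L(w)`. -/
def sigmaModel {A AP W : Type} [Fintype A] (M : PEData A AP W) :
    SimpData A AP (sigmaVert M) where
  S := {X | X.Nonempty ∧ ∃ w : W, X ⊆ sigmaWorld M w}
  chi := fun v => v.1.1
  Wld := {X | ∃ w : W, X = sigmaWorld M w}
  label := fun X => {p | ∃ w : W, X = sigmaWorld M w ∧ p ∈ M.label w}

/-! ### Pseudo-models, the canonical model and unravelling -/

/-- The data of a pseudo-model: a relation `∼_B` for every group `B ⊆ A`. -/
structure PseudoData (A AP W : Type) where
  rel : Finset A → W → W → Prop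
  label : W → Set AP

/-- `M` is a pseudo-model: each `∼_B` is symmetric and transitive, the relations are
antitone (`∼_{B'} ⊆ ∼_B` for `B ⊆ B'`), and `w ∼_B w` together with `w ∼_{B'} w`
implies `w ∼_{B ∪ B'} w`. -/
def PseudoData.IsPseudo {A AP W : Type} [DecidableEq A] (M : PseudoData A AP W) : Prop :=
  (∀ B : Finset A, Symmetric (M.rel B)) ∧
  (∀ B : Finset A, Transitive (M.rel B)) ∧
  (∀ B B' : Finset A, B ⊆ B' → ∀ w w' : W, M.rel B' w w' → M.rel B w w') ∧
  (∀ (w : W) (B B' : Finset A), M.rel B w w → M.rel B' w w → M.rel (B ∪ B') w w)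

/-- Satisfaction on pseudo-models: `D_B φ` quantifies over `∼_B`-successors. -/
def PseudoData.sat {A AP W : Type} (M : PseudoData A AP W) : W → Form A AP → Prop
  | w, .atom p => p ∈ M.label w
  | w, .neg φ => ¬ M.sat w φ
  | w, .and φ ψ => M.sat w φ ∧ M.sat w ψ
  | w, .dk B _ φ => ∀ w' : W, M.rel B w w' → M.sat w' φ

/-- The canonical pseudo-model of a proof system `P`: worlds are the maximal
`P`-consistent sets, `Γ ∼_B Δ` iff every `φ` with `D_B φ ∈ Γ` satisfies `φ ∈ Δ`,
and `L(Γ) = Γ ∩ AP`. -/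
def canonicalPsm (A AP : Type) [Fintype A] [Nonempty AP] (P : Form A AP → Prop) :
    PseudoData A AP {Γ : Set (Form A AP) // MaxConsistent P Γ} where
  rel := fun B Γ Δ => ∀ (hB : B.Nonempty) (φ : Form A AP), Form.dk B hB φ ∈ Γ.1 → φ ∈ Δ.1
  label := fun Γ => {p | Form.atom p ∈ Γ.1}

/-- `IsHist M w l` : the sequence starting at `w` with steps `l` is a history of `M`. -/
def IsHist {A AP W : Type} (M : PseudoData A AP W) : W → List (Finset A × W) → Prop
  | _, [] => True
  | w, (B, w') :: t => M.rel B w w' ∧ IsHist M w' t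

/-- A history `(w₀, B₁, w₁, …, B_k, w_k)` of a pseudo-model `M`. -/
structure Hist {A AP W : Type} (M : PseudoData A AP W) where
  first : W
  steps : List (Finset A × W)
  valid : IsHist M first steps

/-- The last world of a history. -/
def Hist.last {A AP W : Type} {M : PseudoData A AP W} (h : Hist M) : W :=
  (h.steps.map Prod.snd).getLastD h.first

/-- `h →_a h'` : `h'` extends `h` by one step `(B, w)` with `a ∈ B`. -/
def histStep {A AP W : Type} (M : PseudoData A AP W) (a : A) (h h' : Hist M) : Prop :=
  ∃ (B : Finset A) (w : W), a ∈ B ∧ h'.first = h.first ∧ h'.steps = h.steps ++ [(B, w)]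

/-- `∼^U_a` : the symmetric-transitive closure of `→_a`. -/
def histRel {A AP W : Type} (M : PseudoData A AP W) (a : A) : Hist M → Hist M → Prop :=
  Relation.TransGen (fun h h' => histStep M a h h' ∨ histStep M a h' h)

/-- The unravelling `U(M)` of a pseudo-model `M`: worlds are histories, relations are
the `∼^U_a`, and `L^U(h) = L(last h)`. -/
def unravel {A AP W : Type} (M : PseudoData A AP W) : PEData A AP (Hist M) where
  rel := histRel M
  label := fun h => M.label h.last

/-- World-equivalence `w ≡ w'` : same alive agents and related by every alive agent. -/
def pequiv {A AP W : Type} (M : PEData A AP W) (w w' : W) : Prop :=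
  M.live w = M.live w' ∧ ∀ a ∈ M.live w, M.rel a w w'

/-- The quotient of a partial epistemic model by world-equivalence. -/
def properify {A AP W : Type} (M : PEData A AP W) : PEData A AP (Quot (pequiv M)) where
  rel := fun a x y => ∃ w w' : W, x = Quot.mk _ w ∧ y = Quot.mk _ w' ∧ M.rel a w w'
  label := fun x => {p | ∃ w : W, x = Quot.mk _ w ∧ p ∈ M.label w}

/-! ### Local simplicial models, morphisms and the guarded positive fragment -/

/-- The data of a local simplicial model: atomic propositions label the vertices. -/
structure LocalSimpData (A AP V : Type) where
  S : Set (Finset V)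
  chi : V → A
  Wld : Set (Finset V)
  vlabel : V → Set AP

namespace LocalSimpData

variable {A AP V : Type}

/-- A facet: a simplex maximal under inclusion. -/
def IsFacet (C : LocalSimpData A AP V) (X : Finset V) : Prop :=
  X ∈ C.S ∧ ∀ Y ∈ C.S, X ⊆ Y → X = Y

/-- `C` is a local simplicial model with respect to the ownership map `owner : AP → A`:
a chromatic simplicial complex with `Facets ⊆ Wld ⊆ S`, where each vertex is labelled
with atomic propositions belonging to its colour. -/
def IsModel (C : LocalSimpData A AP V) (owner : AP → A) : Prop :=
  (∀ X ∈ C.S, X.Nonempty) ∧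
  (∀ v : V, ({v} : Finset V) ∈ C.S) ∧
  (∀ X ∈ C.S, ∀ Y : Finset V, Y ⊆ X → Y.Nonempty → Y ∈ C.S) ∧
  (∀ X ∈ C.S, ∀ v ∈ X, ∀ w ∈ X, C.chi v = C.chi w → v = w) ∧
  (∀ X, C.IsFacet X → X ∈ C.Wld) ∧ C.Wld ⊆ C.S ∧
  (∀ v : V, ∀ p ∈ C.vlabel v, owner p = C.chi v)

/-- The labelling of a world: the union of the labellings of its vertices. -/
def wlabel (C : LocalSimpData A AP V) (X : Finset V) : Set AP :=
  ⋃ v ∈ X, C.vlabel v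

end LocalSimpData

/-- Purely propositional formulas. -/
inductive PForm (AP : Type) : Type
  | atom : AP → PForm AP
  | neg : PForm AP → PForm AP
  | and : PForm AP → PForm AP → PForm AP

/-- The atomic propositions occurring in a propositional formula. -/
def PForm.atoms {AP : Type} : PForm AP → Set AP
  | .atom p => {p}
  | .neg ψ => ψ.atoms
  | .and ψ χ => ψ.atoms ∪ χ.atoms

/-- Satisfaction of propositional formulas at a world of a local simplicial model. -/
def PForm.psat {A AP V : Type} (C : LocalSimpData A AP V) (w : Finset V) : PForm AP → Prop
  | .atom p => p ∈ C.wlabel w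
  | .neg ψ => ¬ PForm.psat C w ψ
  | .and ψ χ => PForm.psat C w ψ ∧ PForm.psat C w χ

/-- The guarded positive epistemic fragment:
`φ ::= (alive_B ⇒ ψ_B) | φ∧φ | φ∨φ | D_U φ | C_U φ`. -/
inductive GForm (A AP : Type) : Type
  | guard : Finset A → PForm AP → GForm A AP
  | and : GForm A AP → GForm A AP → GForm A AP
  | or : GForm A AP → GForm A AP → GForm A AP
  | dk : Finset A → GForm A AP → GForm A AP
  | ck : Finset A → GForm A AP → GForm A AP

/-- Well-formedness of guarded formulas: in a guard `alive_B ⇒ ψ_B`, all atomic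
propositions of `ψ_B` belong to agents of `B`. -/
def GForm.WF {A AP : Type} (owner : AP → A) : GForm A AP → Prop
  | .guard B ψ => ∀ p ∈ ψ.atoms, owner p ∈ B
  | .and φ₁ φ₂ => φ₁.WF owner ∧ φ₂.WF owner
  | .or φ₁ φ₂ => φ₁.WF owner ∧ φ₂.WF owner
  | .dk _ φ => φ.WF owner
  | .ck _ φ => φ.WF owner

/-- Reachability through a sequence of worlds, consecutive ones sharing a
`U`-coloured simplex. -/
def creach {A AP V : Type} (C : LocalSimpData A AP V) (U : Finset A) :
    Finset V → Finset V → Prop :=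
  Relation.ReflTransGen
    (fun X Y => Y ∈ C.Wld ∧ (↑U : Set A) ⊆ C.chi '' ((↑X : Set V) ∩ ↑Y))

/-- Satisfaction of guarded positive formulas on local simplicial models. -/
def GForm.gsat {A AP V : Type} (C : LocalSimpData A AP V) :
    Finset V → GForm A AP → Prop
  | w, .guard B ψ => ((↑B : Set A) ⊆ C.chi '' (↑w : Set V)) → ψ.psat C w
  | w, .and φ₁ φ₂ => φ₁.gsat C w ∧ φ₂.gsat C w
  | w, .or φ₁ φ₂ => φ₁.gsat C w ∨ φ₂.gsat C w
  | w, .dk U φ => ∀ w' ∈ C.Wld, (↑U : Set A) ⊆ C.chi '' ((↑w : Set V) ∩ ↑w') → φ.gsat C w'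
  | w, .ck U φ => ∀ w' ∈ C.Wld, creach C U w w' → φ.gsat C w'

/-- Image of a simplex under a vertex map. -/
def fimage {V V' : Type} (f : V → V') (X : Finset V) : Finset V' :=
  X.image f

/-- Morphisms of local simplicial models: map simplexes to simplexes and worlds to
worlds, preserving colours and vertex labellings. -/
def IsMorphism {A AP V V' : Type} (C : LocalSimpData A AP V) (D : LocalSimpData A AP V')
    (f : V → V') : Prop :=
  (∀ X ∈ C.S, fimage f X ∈ D.S) ∧
  (∀ X ∈ C.Wld, fimage f X ∈ D.Wld) ∧
  (∀ v : V, D.chi (f v) = C.chi v) ∧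
  (∀ v : V, D.vlabel (f v) = C.vlabel v)

end

set_option linter.unusedSectionVars false
namespace UnravelAux
variable {A AP W : Type} [DecidableEq A] {M : PseudoData A AP W}

def lastOf (f : W) (l : List (Finset A × W)) : W := (l.map Prod.snd).getLastD f

@[simp] lemma lastOf_nil (f : W) : lastOf f ([] : List (Finset A × W)) = f := rfl

lemma lastOf_cons (f : W) (e : Finset A × W) (l : List (Finset A × W)) :
    lastOf f (e :: l) = lastOf e.2 l := by
  simp only [lastOf, List.map_cons, List.getLastD_cons]

lemma lastOf_append (f : W) (p s : List (Finset A × W)) :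
    lastOf f (p ++ s) = lastOf (lastOf f p) s := by
  induction p generalizing f with
  | nil => simp
  | cons e t ih => simp [lastOf_cons, ih]

lemma lastOf_concat (f : W) (l : List (Finset A × W)) (e : Finset A × W) :
    lastOf f (l ++ [e]) = e.2 := by
  rw [lastOf_append]; rfl

lemma hist_last_eq (h : Hist M) : h.last = lastOf h.first h.steps := rfl

lemma isHist_suffix : ∀ (p : List (Finset A × W)) (f : W) {s},
    IsHist M f (p ++ s) → IsHist M (lastOf f p) s := by
  intro p
  induction p with
  | nil => intro f s hh; simpa using hh
  | cons e t ih =>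
      intro f s hh
      obtain ⟨_, h2⟩ := hh
      rw [lastOf_cons]
      exact ih e.2 h2

lemma isHist_append_single : ∀ (l : List (Finset A × W)) (f : W) {B w},
    IsHist M f l → M.rel B (lastOf f l) w → IsHist M f (l ++ [(B, w)]) := by
  intro l
  induction l with
  | nil => intro f B w _ hr; exact ⟨hr, trivial⟩
  | cons e t ih =>
      intro f B w hh hr
      obtain ⟨h1, h2⟩ := hh
      exact ⟨h1, ih e.2 h2 (by rwa [lastOf_cons] at hr)⟩

lemma chainCore (hM : M.IsPseudo) {B : Finset A} :
    ∀ (s : List (Finset A × W)) (f : W), IsHist M f s → s ≠ [] →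
      (∀ e ∈ s, B ⊆ e.1) → M.rel B f (lastOf f s) := by
  intro s
  induction s with
  | nil => intro f _ hne _; exact absurd rfl hne
  | cons e t ih =>
      intro f hh _ hB
      obtain ⟨h1, h2⟩ := hh
      have hfe : M.rel B f e.2 := hM.2.2.1 _ _ (hB e (List.mem_cons_self (a := e) (l := t))) _ _ h1
      rw [lastOf_cons]
      rcases eq_or_ne t [] with rfl | hne
      · simpa using hfe
      · exact hM.2.1 B hfe (ih e.2 h2 hne fun x hx => hB x (List.mem_cons_of_mem _ hx))

lemma chainRel (hM : M.IsPseudo) {B : Finset A} {p s : List (Finset A × W)} {f : W}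
    (hh : IsHist M f (p ++ s)) (hne : s ≠ []) (hB : ∀ e ∈ s, B ⊆ e.1) :
    M.rel B (lastOf f p) (lastOf f (p ++ s)) := by
  rw [lastOf_append]
  exact chainCore hM s (lastOf f p) (isHist_suffix p f hh) hne hB

/-- The key invariant: `h` and `h'` share a prefix, all remaining edges carry `B`,
and in the degenerate equal case there is a `B`-loop at `last h`. -/
def Q (M : PseudoData A AP W) (B : Finset A) (h h' : Hist M) : Prop :=
  h'.first = h.first ∧ ∃ p s t, h.steps = p ++ s ∧ h'.steps = p ++ t ∧
    (∀ e ∈ s, B ⊆ e.1) ∧ (∀ e ∈ t, B ⊆ e.1) ∧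
    (s = [] → t = [] → M.rel B h.last h.last)

lemma Q_symm {B : Finset A} {h h' : Hist M} (hq : Q M B h h') : Q M B h' h := by
  obtain ⟨hf, p, s, t, hs, ht, hBs, hBt, hloop⟩ := hq
  refine ⟨hf.symm, p, t, s, ht, hs, hBt, hBs, fun h1 h2 => ?_⟩
  have : h'.last = h.last := by
    rw [hist_last_eq, hist_last_eq, hf, hs, ht, h1, h2]
  rw [this]; exact hloop h2 h1

lemma Q_step {a : A} {h h' : Hist M} (hst : histStep M a h h') : Q M {a} h h' := by
  obtain ⟨B, w, haB, hf, hsteps⟩ := hst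
  exact ⟨hf, h.steps, [], [(B, w)], by simp, hsteps,
    by simp, by simp [Finset.singleton_subset_iff, haB], by simp⟩

lemma Q_trans (hM : M.IsPseudo) {B : Finset A} {h h'' h' : Hist M}
    (h1 : Q M B h h'') (h2 : Q M B h'' h') : Q M B h h' := by
  obtain ⟨hf1, p, s, t, hps, hpt, hBs, hBt, hloop1⟩ := h1
  obtain ⟨hf2, q, u, v, hqu, hqv, hBu, hBv, hloop2⟩ := h2
  have hf : h'.first = h.first := hf2.trans hf1
  have heq : p ++ t = q ++ u := hpt.symm.trans hqu
  -- helper for the loop case: h.steps = p, h''.steps = p ++ t', t' ≠ [], edges carry B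
  have loopHelper : ∀ t' : List (Finset A × W), h.steps = p → h''.steps = p ++ t' →
      t' ≠ [] → (∀ e ∈ t', B ⊆ e.1) → M.rel B h.last h.last := by
    intro t' hp hpt' hne hBt'
    have hv : IsHist M h.first (p ++ t') := by
      have := h''.valid; rwa [hpt', hf1] at this
    have c := chainRel hM hv hne hBt'
    have hl : h.last = lastOf h.first p := by rw [hist_last_eq, hp]
    rw [← hl] at c
    exact hM.2.1 B c (hM.1 B c)
  rcases List.append_eq_append_iff.mp heq with ⟨r, hqr, htr⟩ | ⟨r, hpr, hur⟩
  · -- q = p ++ r, t = r ++ u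
    refine ⟨hf, p, s, r ++ v, hps, by rw [hqv, hqr, List.append_assoc], hBs, ?_, ?_⟩
    · intro e he
      rcases List.mem_append.mp he with her | hev
      · exact hBt e (by rw [htr]; exact List.mem_append.mpr (Or.inl her))
      · exact hBv e hev
    · intro hse hrv
      have hr : r = [] := by cases r with | nil => rfl | cons _ _ => simp at hrv
      subst hr
      rcases eq_or_ne t [] with rfl | htne
      · exact hloop1 hse rfl
      · exact loopHelper t (by rw [hps, hse]; simp) hpt htne hBt
  · -- p = q ++ r, u = r ++ t
    refine ⟨hf, q, r ++ s, v, by rw [hps, hpr, List.append_assoc], hqv, ?_, hBv, ?_⟩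
    · intro e he
      rcases List.mem_append.mp he with her | hes
      · exact hBu e (by rw [hur]; exact List.mem_append.mpr (Or.inl her))
      · exact hBs e hes
    · intro hrs hv0
      have hr : r = [] := by cases r with | nil => rfl | cons _ _ => simp at hrs
      have hs0 : s = [] := by simpa [hr] using hrs
      subst hr
      rcases eq_or_ne t [] with rfl | htne
      · exact hloop1 hs0 rfl
      · exact loopHelper t (by rw [hps, hs0]; simp) (by simpa using hpt) htne hBt

lemma Q_union (hM : M.IsPseudo) {B B' : Finset A} {h h' : Hist M}
    (h1 : Q M B h h') (h2 : Q M B' h h') : Q M (B ∪ B') h h' := by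
  obtain ⟨hf, p, s, t, hps, hpt, hBs, hBt, hloop1⟩ := h1
  obtain ⟨_, q, u, v, hqu, hqv, hBu, hBv, hloop2⟩ := h2
  have heq : p ++ s = q ++ u := hps.symm.trans hqu
  have heq' : p ++ t = q ++ v := hpt.symm.trans hqv
  -- loop helper at h.last: if h.steps = x ++ y, y ≠ [], edges of y carry C then C-loop at h.last
  have loopEnd : ∀ (C : Finset A) (x y : List (Finset A × W)), h.steps = x ++ y →
      y ≠ [] → (∀ e ∈ y, C ⊆ e.1) → M.rel C h.last h.last := by
    intro C x y hxy hne hC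
    have hv : IsHist M h.first (x ++ y) := by have := h.valid; rwa [hxy] at this
    have c := chainRel hM hv hne hC
    have hl : h.last = lastOf h.first (x ++ y) := by rw [hist_last_eq, hxy]
    rw [← hl] at c
    exact hM.2.1 _ (hM.1 _ c) c
  rcases List.append_eq_append_iff.mp heq with ⟨r, hqr, hsr⟩ | ⟨r, hpr, hur⟩
  · -- q = p ++ r, s = r ++ u ; also t = r ++ v
    have htv : t = r ++ v := by
      have : p ++ t = p ++ (r ++ v) := by rw [heq', hqr, List.append_assoc]
      exact List.append_cancel_left this
    refine ⟨hf, q, u, v, by rw [hps, hsr, hqr, List.append_assoc], hqv, ?_, ?_, ?_⟩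
    · intro e he
      exact Finset.union_subset (hBs e (by rw [hsr]; exact List.mem_append.mpr (Or.inr he)))
        (hBu e he)
    · intro e he
      exact Finset.union_subset (hBt e (by rw [htv]; exact List.mem_append.mpr (Or.inr he)))
        (hBv e he)
    · intro hu0 hv0
      have lB' : M.rel B' h.last h.last := hloop2 hu0 hv0
      have lB : M.rel B h.last h.last := by
        rcases eq_or_ne r [] with rfl | hrne
        · exact hloop1 (by simpa [hu0] using hsr) (by simpa [hv0] using htv)
        · exact loopEnd B p s hps (by rw [hsr, hu0]; simpa using hrne) hBs
      exact hM.2.2.2 _ _ _ lB lB'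
  · -- p = q ++ r, u = r ++ s ; also v = r ++ t
    have hvt : v = r ++ t := by
      have : q ++ v = q ++ (r ++ t) := by rw [← heq', hpr, List.append_assoc]
      exact List.append_cancel_left this
    refine ⟨hf, p, s, t, hps, hpt, ?_, ?_, ?_⟩
    · intro e he
      exact Finset.union_subset (hBs e he)
        (hBu e (by rw [hur]; exact List.mem_append.mpr (Or.inr he)))
    · intro e he
      exact Finset.union_subset (hBt e he)
        (hBv e (by rw [hvt]; exact List.mem_append.mpr (Or.inr he)))
    · intro hs0 ht0
      have lB : M.rel B h.last h.last := hloop1 hs0 ht0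
      have lB' : M.rel B' h.last h.last := by
        rcases eq_or_ne r [] with rfl | hrne
        · exact hloop2 (by simpa [hs0] using hur) (by simpa [ht0] using hvt)
        · exact loopEnd B' q u (by rw [hps, hpr, hs0]; simp [hur, hs0]) 
            (by rw [hur, hs0]; simpa using hrne) hBu
      exact hM.2.2.2 _ _ _ lB lB'

lemma histRel_Q (hM : M.IsPseudo) {a : A} {h h' : Hist M} (hr : histRel M a h h') :
    Q M {a} h h' := by
  induction hr with
  | single hst => rcases hst with hst | hst
                  · exact Q_step hst
                  · exact Q_symm (Q_step hst)
  | tail _ hst ih =>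
      refine Q_trans hM ih ?_
      rcases hst with hst | hst
      · exact Q_step hst
      · exact Q_symm (Q_step hst)

lemma Q_of_forall (hM : M.IsPseudo) {B : Finset A} (hB : B.Nonempty) {h h' : Hist M}
    (hall : ∀ a ∈ B, histRel M a h h') : Q M B h h' := by
  induction B using Finset.induction_on with
  | empty => exact absurd hB (by simp)
  | @insert a C ha ih =>
      have hQa : Q M {a} h h' := histRel_Q hM (hall a (Finset.mem_insert_self a C))
      rcases C.eq_empty_or_nonempty with rfl | hC
      · simpa using hQa
      · have hQC : Q M C h h' := ih hC fun b hb => hall b (Finset.mem_insert_of_mem hb)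
        have := Q_union hM hQa hQC
        rwa [Finset.insert_eq]

lemma Q_elim (hM : M.IsPseudo) {B : Finset A} {h h' : Hist M} (hq : Q M B h h') :
    M.rel B h.last h'.last := by
  obtain ⟨hf, p, s, t, hps, hpt, hBs, hBt, hloop⟩ := hq
  have hvh : IsHist M h.first (p ++ s) := by have := h.valid; rwa [hps] at this
  have hvh' : IsHist M h.first (p ++ t) := by have := h'.valid; rwa [hpt, hf] at this
  have hlh : h.last = lastOf h.first (p ++ s) := by rw [hist_last_eq, hps]
  have hlh' : h'.last = lastOf h.first (p ++ t) := by rw [hist_last_eq, hpt, hf]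
  rcases eq_or_ne s [] with rfl | hsne <;> rcases eq_or_ne t [] with rfl | htne
  · have : h'.last = h.last := by rw [hlh, hlh']
    rw [this]; exact hloop rfl rfl
  · have c := chainRel hM hvh' htne hBt
    rw [← hlh'] at c
    have : h.last = lastOf h.first p := by simpa using hlh
    rwa [← this] at c
  · have c := chainRel hM hvh hsne hBs
    rw [← hlh] at c
    have : h'.last = lastOf h.first p := by simpa using hlh'
    rw [this]; exact hM.1 B c
  · have c1 := chainRel hM hvh hsne hBs
    have c2 := chainRel hM hvh' htne hBt
    rw [← hlh] at c1; rw [← hlh'] at c2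
    exact hM.2.1 B (hM.1 B c1) c2

end UnravelAux

/-- Unravelling preserves truth: for every history `h` of a pseudo-model
`M` and every formula `φ` of `L_D`, `M,last(h) ⊨ φ` iff `U(M),h ⊨ φ`. -/
theorem unravel_preserves_truth (A AP W : Type) [DecidableEq A]
    (M : PseudoData A AP W) (hM : M.IsPseudo)
    (h : Hist M) (φ : Form A AP) :
    M.sat h.last φ ↔ (unravel M).sat h φ := by
  induction φ generalizing h with
  | atom p => exact Iff.rfl
  | neg ψ ih => exact not_congr (ih h)
  | and ψ χ ih1 ih2 => exact and_congr (ih1 h) (ih2 h)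
  | dk B hB ψ ih =>
      constructor
      · intro H h' hrel
        have hq : UnravelAux.Q M B h h' := UnravelAux.Q_of_forall hM hB hrel
        exact (ih h').mp (H h'.last (UnravelAux.Q_elim hM hq))
      · intro H w' hrel
        have hval : IsHist M h.first (h.steps ++ [(B, w')]) :=
          UnravelAux.isHist_append_single h.steps h.first h.valid hrel
        set h' : Hist M := ⟨h.first, h.steps ++ [(B, w')], hval⟩ with hh'
        have hlast : h'.last = w' := UnravelAux.lastOf_concat h.first h.steps (B, w')
        have hall : ∀ a ∈ B, (unravel M).rel a h h' := fun a ha =>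
          Relation.TransGen.single (Or.inl ⟨B, w', ha, rfl, rfl⟩)
        have := (ih h').mpr (H h' hall)
        rwa [hlast] at this
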